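/- (Proposition 1.9, Kim's refined conjecture for d-collapsible complexes.) Let d ≥ 1, let n_i be positive and r_i non-negative integers for i ∈ {1,…,d+1} with n_i ≥ r_i + 1. Let K be a d-collapsible simplicial complex whose vertex set N is partitioned into d+1 disjoint subsets N = N_1 ⊔ ⋯ ⊔ N_{d+1} with |N_i| = n_i and dim K[N_i] ≤ r_i − 1 for every i. Then K contains at most n_1⋯n_{d+1} − (n_1 − r_1)⋯(n_{d+1} − r_{d+1}) colorful d-faces. -/
import Mathlib


open scoped BigOperators

/-- A (finite abstract) simplicial complex: a family of finite subsets of the vertex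
type closed under taking subsets. -/
def IsComplex {V : Type*} [DecidableEq V] (K : Finset (Finset V)) : Prop :=
  ∀ A ∈ K, ∀ B ⊆ A, B ∈ K

/-- `K'` arises from `K` by an elementary `d`-collapse: there are faces `L, M ∈ K`
with `|L| ≤ d` (i.e. `dim L ≤ d - 1`) such that `M` is the unique inclusion-wise
maximal face of `K` containing `L` (equivalently, every face containing `L` is
contained in `M`), and `K'` is obtained from `K` by removing all faces containing `L`. -/
def ElemCollapse {V : Type*} [DecidableEq V] (d : ℕ) (K K' : Finset (Finset V)) : Prop :=
  ∃ L M, L ∈ K ∧ M ∈ K ∧ L.card ≤ d ∧ (∀ A ∈ K, L ⊆ A → A ⊆ M) ∧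
    K' = K.filter fun A => ¬ L ⊆ A

/-- `K` is `d`-collapsible: there is a sequence of elementary `d`-collapses from `K`
to the empty complex. -/
def Collapsible {V : Type*} [DecidableEq V] (d : ℕ) (K : Finset (Finset V)) : Prop :=
  Relation.ReflTransGen (ElemCollapse d) K ∅

/-- **Proposition 1.9 (Kim's refined conjecture for `d`-collapsible complexes)**.
If `K` is `d`-collapsible with color classes of sizes `n i`, `n i ≥ r i + 1`, and the
induced subcomplex on each color class has dimension at most `r i - 1` (i.e. every
face contained in a single color class has at most `r i` vertices), then the number
of colorful `d`-faces of `K` is at most `n 1 ⋯ n (d+1) - (n 1 - r 1) ⋯ (n (d+1) - r (d+1))`. -/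
theorem kim_refined_conjecture_collapsible
    (d : ℕ) (hd : 1 ≤ d) {V : Type} [Fintype V] [DecidableEq V]
    (K : Finset (Finset V)) (hK : IsComplex K) (hcoll : Collapsible d K)
    (color : V → Fin (d + 1)) (n r : Fin (d + 1) → ℕ)
    (hn : ∀ i, (Finset.univ.filter fun v => color v = i).card = n i)
    (hnr : ∀ i, r i + 1 ≤ n i)
    (hdim : ∀ i, ∀ A ∈ K, (∀ v ∈ A, color v = i) → A.card ≤ r i) :
    (K.filter fun A => ∀ i, (A.filter fun v => color v = i).card = 1).card ≤
      ∏ i, n i - ∏ i, (n i - r i) := by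
  classical
  set S : Finset (Finset V) := K.filter fun A => ∀ i, (A.filter fun v => color v = i).card = 1
    with hS
  set m : Fin (d + 1) → ℕ := fun i => n i - r i with hm
  have hm1 : ∀ i, 1 ≤ m i := fun i => by have := hnr i; simp only [hm]; omega
  have hmn : ∀ i, m i ≤ n i := fun i => by simp only [hm]; omega
  -- the color classes as types, and the "grid" of colorful tuples
  have hcardNi : ∀ i : Fin (d + 1), Fintype.card {v : V // color v = i} = n i := fun i => by
    rw [Fintype.card_subtype]; exact hn i
  -- injective rational labels for vertices
  set ζ : V → ℚ := fun v => ((Fintype.equivFin V v : ℕ) : ℚ) with hζdef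
  have hζ : Function.Injective ζ := by
    intro a b hab
    have : ((Fintype.equivFin V a : ℕ) : ℚ) = ((Fintype.equivFin V b : ℕ) : ℚ) := hab
    exact (Fintype.equivFin V).injective (Fin.ext (by exact_mod_cast this))
  -- pivots
  have hpiv : ∀ i : Fin (d + 1), ∃ f : Fin (m i) → {v : V // color v = i},
      Function.Injective f := by
    intro i
    have hc : Fintype.card (Fin (m i)) ≤ Fintype.card {v : V // color v = i} := by
      rw [Fintype.card_fin, hcardNi]; exact hmn i
    obtain ⟨f⟩ := Function.Embedding.nonempty_of_card_le hc
    exact ⟨f, f.injective⟩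
  choose piv hpivinj using hpiv
  set nodes : ∀ i : Fin (d + 1), Fin (m i) → ℚ := fun i a => ζ (piv i a).val with hnodesdef
  have hnodes : ∀ i, Function.Injective (nodes i) := fun i =>
    hζ.comp (Subtype.val_injective.comp (hpivinj i))
  -- Lagrange polynomials and the basic functions g
  set gp : ∀ i : Fin (d + 1), Fin (m i) → Polynomial ℚ :=
    fun i a => Lagrange.basis Finset.univ (nodes i) a with hgpdef
  have hgpdeg : ∀ i a, (gp i a).natDegree ≤ m i - 1 := by
    intro i a
    have : (gp i a).natDegree = (Finset.univ : Finset (Fin (m i))).card - 1 :=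
      Lagrange.natDegree_basis (s := (Finset.univ : Finset (Fin (m i)))) (v := nodes i)
        ((hnodes i).injOn) (Finset.mem_univ a)
    rw [this]
    simp
  set g : ∀ i : Fin (d + 1), Fin (m i) → {v : V // color v = i} → ℚ :=
    fun i a u => (gp i a).eval (ζ u.val) with hgdef
  have hgsel : ∀ i (a b : Fin (m i)), g i a (piv i b) = if a = b then 1 else 0 := by
    intro i a b
    rw [hgdef]
    by_cases hab : a = b
    · subst hab
      simp only [if_pos rfl]
      exact Lagrange.eval_basis_self (s := (Finset.univ : Finset (Fin (m i)))) (v := nodes i)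
        ((hnodes i).injOn) (Finset.mem_univ a)
    · simp only [if_neg hab]
      exact Lagrange.eval_basis_of_ne (s := (Finset.univ : Finset (Fin (m i)))) (v := nodes i)
        hab (Finset.mem_univ b)
  -- tensor functions on the grid
  set zf : (∀ i, Fin (m i)) → (∀ i : Fin (d + 1), {v : V // color v = i}) → ℚ :=
    fun b x => ∏ i, g i (b i) (x i) with hzfdef
  -- the face of a grid point
  set fc : (∀ i : Fin (d + 1), {v : V // color v = i}) → Finset V :=
    fun x => Finset.image (fun i => (x i).val) Finset.univ with hfcdef
  -- MAIN LEMMA: a combination of the zf's supported on colorful faces of a collapsible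
  -- subfamily of K is zero
  have main : ∀ (c : (∀ i, Fin (m i)) → ℚ) (K' : Finset (Finset V)),
      Relation.ReflTransGen (ElemCollapse d) K' (∅ : Finset (Finset V)) → K' ⊆ K →
      (∀ x, (∑ b, c b * zf b x) ≠ 0 → fc x ∈ K') →
      ∀ x, (∑ b, c b * zf b x) = 0 := by
    intro c K' hchain
    induction hchain using Relation.ReflTransGen.head_induction_on with
    | refl =>
      intro _ hsupp x
      by_contra hzx
      exact absurd (hsupp x hzx) (Finset.notMem_empty _)
    | @head K₁ K₂ hstep hchain ih =>
      intro hsub hsupp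
      obtain ⟨L, M, hLK, hMK, hLcard, hmax, hfilter⟩ := hstep
      have hsupp2 : ∀ x, (∑ b, c b * zf b x) ≠ 0 → fc x ∈ K₂ := by
        intro x hzx
        have hfcK1 := hsupp x hzx
        rw [hfilter, Finset.mem_filter]
        refine ⟨hfcK1, ?_⟩
        intro hLfc
        -- find a free color j
        obtain ⟨j, hj⟩ : ∃ j : Fin (d + 1), ∀ v ∈ L, color v ≠ j := by
          have hcard : (L.image color).card < Fintype.card (Fin (d + 1)) := by
            calc (L.image color).card ≤ L.card := Finset.card_image_le
              _ ≤ d := hLcard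
              _ < d + 1 := Nat.lt_succ_self d
              _ = Fintype.card (Fin (d + 1)) := (Fintype.card_fin _).symm
          by_contra h
          push_neg at h
          have hsubuniv : (Finset.univ : Finset (Fin (d + 1))) ⊆ L.image color := by
            intro j _
            obtain ⟨v, hv, hcv⟩ := h j
            exact Finset.mem_image.mpr ⟨v, hv, hcv⟩
          have := Finset.card_le_card hsubuniv
          rw [Finset.card_univ] at this
          omega
        -- restriction polynomial along color j through x
        set P : Polynomial ℚ := ∑ b : (∀ i, Fin (m i)),
          Polynomial.C (c b * ∏ i ∈ Finset.univ.erase j, g i (b i) (x i)) * gp j (b j) with hPdef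
        have hPeval : ∀ w : {v : V // color v = j},
            P.eval (ζ w.val) = ∑ b, c b * zf b (Function.update x j w) := by
          intro w
          rw [hPdef, Polynomial.eval_finset_sum]
          refine Finset.sum_congr rfl fun b _ => ?_
          rw [Polynomial.eval_mul, Polynomial.eval_C]
          have hprod : zf b (Function.update x j w)
              = g j (b j) w * ∏ i ∈ Finset.univ.erase j, g i (b i) (x i) := by
            simp only [hzfdef]
            rw [← Finset.mul_prod_erase Finset.univ _ (Finset.mem_univ j)]
            congr 1
            · rw [Function.update_self]
            · refine Finset.prod_congr rfl fun i hi => ?_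
              rw [Function.update_of_ne (Finset.mem_erase.mp hi).1]
          rw [hprod]; ring
        have hvanish : ∀ w : {v : V // color v = j}, w.val ∉ M → P.eval (ζ w.val) = 0 := by
          intro w hwM
          rw [hPeval w]
          by_contra hne
          have h1 := hsupp _ hne
          have hLsub : L ⊆ fc (Function.update x j w) := by
            intro v hv
            have hvfc : v ∈ fc x := hLfc hv
            obtain ⟨i, -, hvi⟩ := Finset.mem_image.mp hvfc
            have hcol : color v = i := by rw [← hvi]; exact (x i).prop
            refine Finset.mem_image.mpr ⟨i, Finset.mem_univ i, ?_⟩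
            have hij : i ≠ j := by rintro rfl; exact hj v hv hcol
            rw [Function.update_of_ne hij]
            exact hvi
          have hsubM := hmax _ h1 hLsub
          refine hwM (hsubM ?_)
          refine Finset.mem_image.mpr ⟨j, Finset.mem_univ j, ?_⟩
          rw [Function.update_self]
        have hMfilter : (M.filter fun v => color v = j) ∈ K :=
          hK M (hsub hMK) _ (Finset.filter_subset _ _)
        have hMj : (M.filter fun v => color v = j).card ≤ r j :=
          hdim j _ hMfilter (fun v hv => (Finset.mem_filter.mp hv).2)
        have hcardmem : Fintype.card {w : {v : V // color v = j} // w.val ∈ M}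
            ≤ (M.filter fun v => color v = j).card := by
          rw [← Fintype.card_coe]
          apply Fintype.card_le_of_injective
            (fun w => ⟨w.val.val, Finset.mem_filter.mpr ⟨w.prop, w.val.prop⟩⟩)
          intro w1 w2 h12
          apply Subtype.ext; apply Subtype.ext
          simpa using congrArg Subtype.val h12
        have hcardcompl : m j ≤ Fintype.card {w : {v : V // color v = j} // w.val ∉ M} := by
          have h2 : Fintype.card {w : {v : V // color v = j} // ¬ w.val ∈ M}
              = Fintype.card {v : V // color v = j}
                - Fintype.card {w : {v : V // color v = j} // w.val ∈ M} :=
            Fintype.card_subtype_compl _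
          rw [h2, hcardNi]
          have hmj : m j = n j - r j := by rw [hm]
          omega
        have hPdeg : P.natDegree < m j := by
          have hle : P.natDegree ≤ m j - 1 := by
            rw [hPdef]
            apply Polynomial.natDegree_sum_le_of_forall_le
            intro b _
            exact (Polynomial.natDegree_C_mul_le _ _).trans (hgpdeg j (b j))
          have := hm1 j
          omega
        have hP0 : P = 0 := by
          apply Polynomial.eq_zero_of_natDegree_lt_card_of_eval_eq_zero P
            (f := fun w : {w : {v : V // color v = j} // w.val ∉ M} => ζ w.val.val)
          · intro w1 w2 h12
            apply Subtype.ext; apply Subtype.ext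
            exact hζ h12
          · exact fun w => hvanish w.val w.prop
          · exact hPdeg.trans_le hcardcompl
        apply hzx
        have h := hPeval (x j)
        rw [Function.update_eq_self] at h
        rw [← h, hP0]
        simp
      exact ih (fun A hA => hsub (by rw [hfilter] at hA; exact Finset.mem_of_mem_filter _ hA))
        hsupp2
  -- choose the unique vertex of each color in each colorful face
  have htup : ∀ (A : {A // A ∈ S}) (i : Fin (d + 1)),
      ∃ a : V, (A.val.filter fun v => color v = i) = {a} := by
    intro A i
    exact Finset.card_eq_one.mp ((Finset.mem_filter.mp A.prop).2 i)
  choose t ht using htup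
  have htcol : ∀ A i, color (t A i) = i := by
    intro A i
    have h1 : t A i ∈ A.val.filter fun v => color v = i := by
      rw [ht A i]; exact Finset.mem_singleton_self _
    exact (Finset.mem_filter.mp h1).2
  have htmem : ∀ A i, t A i ∈ A.val := by
    intro A i
    have h1 : t A i ∈ A.val.filter fun v => color v = i := by
      rw [ht A i]; exact Finset.mem_singleton_self _
    exact (Finset.mem_filter.mp h1).1
  set tup : {A // A ∈ S} → (∀ i : Fin (d + 1), {v : V // color v = i}) :=
    fun A i => ⟨t A i, htcol A i⟩ with htupdef
  have hfctup : ∀ A, fc (tup A) = A.val := by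
    intro A
    apply Finset.ext
    intro v
    simp only [hfcdef, Finset.mem_image, Finset.mem_univ, true_and]
    constructor
    · rintro ⟨i, rfl⟩
      exact htmem A i
    · intro hv
      refine ⟨color v, ?_⟩
      have hvf : v ∈ A.val.filter fun u => color u = color v :=
        Finset.mem_filter.mpr ⟨hv, rfl⟩
      rw [ht A (color v)] at hvf
      exact (Finset.mem_singleton.mp hvf).symm
  have htupinj : Function.Injective tup := by
    intro A B hAB
    apply Subtype.ext
    rw [← hfctup A, ← hfctup B, hAB]
  set sing : {A // A ∈ S} → (∀ i : Fin (d + 1), {v : V // color v = i}) → ℚ :=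
    fun A => Pi.single (tup A) (1 : ℚ) with hsingdef
  -- pivot grid points
  set pt : (∀ i, Fin (m i)) → (∀ i : Fin (d + 1), {v : V // color v = i}) :=
    fun b i => piv i (b i) with hptdef
  have hzfpt : ∀ b b' : (∀ i, Fin (m i)), zf b (pt b') = if b = b' then 1 else 0 := by
    intro b b'
    by_cases hbb : b = b'
    · subst hbb
      simp only [hzfdef, hptdef, if_pos]
      apply Finset.prod_eq_one
      intro i _
      rw [hgsel]
      simp
    · simp only [hzfdef, hptdef]
      rw [if_neg hbb]
      obtain ⟨i, hi⟩ : ∃ i, b i ≠ b' i := by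
        by_contra h
        push_neg at h
        exact hbb (funext h)
      apply Finset.prod_eq_zero (Finset.mem_univ i)
      rw [hgsel]
      exact if_neg hi
  -- linear independence of the combined family
  have hindep : LinearIndependent ℚ
      (Sum.elim sing zf) := by
    rw [Fintype.linearIndependent_iff]
    intro gc hgc
    have hpt0 : ∀ x, (∑ A : {A // A ∈ S}, gc (Sum.inl A) * sing A x)
        + (∑ b, gc (Sum.inr b) * zf b x) = 0 := by
      intro x
      have h1 := congrFun hgc x
      rw [Finset.sum_apply] at h1
      rw [Fintype.sum_sum_type] at h1
      simp only [Pi.smul_apply, smul_eq_mul, Sum.elim_inl, Sum.elim_inr, Pi.zero_apply] at h1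
      exact h1
    have hsupp : ∀ x, (∑ b, gc (Sum.inr b) * zf b x) ≠ 0 → fc x ∈ K := by
      intro x hx
      have h1 := hpt0 x
      have h2 : (∑ A : {A // A ∈ S}, gc (Sum.inl A) * sing A x) ≠ 0 := by
        intro h0
        rw [h0, zero_add] at h1
        exact hx h1
      obtain ⟨A, -, hA⟩ := Finset.exists_ne_zero_of_sum_ne_zero h2
      have h3 : sing A x ≠ 0 := by
        intro h0
        rw [h0, mul_zero] at hA
        exact hA rfl
      have h4 : x = tup A := by
        by_contra hne
        simp only [hsingdef] at h3
        rw [Pi.single_apply, if_neg hne] at h3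
        exact h3 rfl
      rw [h4, hfctup A]
      exact Finset.mem_of_mem_filter _ A.prop
    have hz0 : ∀ x, (∑ b, gc (Sum.inr b) * zf b x) = 0 :=
      main (fun b => gc (Sum.inr b)) K hcoll Finset.Subset.rfl hsupp
    have hinr : ∀ b', gc (Sum.inr b') = 0 := by
      intro b'
      have h0 := hz0 (pt b')
      simp only [hzfpt, mul_ite, mul_one, mul_zero] at h0
      rwa [Finset.sum_ite_eq' Finset.univ b' (fun b => gc (Sum.inr b)),
        if_pos (Finset.mem_univ b')] at h0
    have hinl : ∀ A₀, gc (Sum.inl A₀) = 0 := by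
      intro A₀
      have h0 := hpt0 (tup A₀)
      have hz : (∑ b, gc (Sum.inr b) * zf b (tup A₀)) = 0 := by
        apply Finset.sum_eq_zero
        intro b _
        rw [hinr]
        ring
      rw [hz, add_zero] at h0
      have hterm : ∀ A : {A // A ∈ S}, gc (Sum.inl A) * sing A (tup A₀)
          = if A = A₀ then gc (Sum.inl A) else 0 := by
        intro A
        simp only [hsingdef]
        rw [Pi.single_apply]
        by_cases hA : A = A₀
        · subst hA; simp
        · rw [if_neg ?hne, if_neg hA, mul_zero]
          case hne =>
            intro he
            exact hA (htupinj he.symm)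
      rw [Finset.sum_congr rfl (fun A _ => hterm A)] at h0
      rwa [Finset.sum_ite_eq' Finset.univ A₀ (fun A => gc (Sum.inl A)),
        if_pos (Finset.mem_univ _)] at h0
    intro i
    cases i with
    | inl A => exact hinl A
    | inr b => exact hinr b
  -- counting
  have hcard := hindep.fintype_card_le_finrank
  rw [Module.finrank_pi ℚ] at hcard
  rw [Fintype.card_sum, Fintype.card_coe, Fintype.card_pi, Fintype.card_pi] at hcard
  simp only [Fintype.card_fin] at hcard
  have hcardG : ∏ i, Fintype.card {v : V // color v = i} = ∏ i, n i :=
    Finset.prod_congr rfl (fun i _ => hcardNi i)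
  rw [hcardG] at hcard
  have hprodm : ∏ i, m i = ∏ i, (n i - r i) := by rw [hm]
  rw [hprodm] at hcard
  exact Nat.le_sub_of_add_le hcard
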